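/- Let 1 ≤ n ≤ g and let v_1, …, v_n ∈ H satisfy gcd(v_1,…,v_n) = 1; set S = span_ℤ(v_1,…,v_n). Then there exists a dual summand for v_1, …, v_n: an isotropic direct summand D ⊆ H of rank n with a basis u_1, …, u_n satisfying ω(v_i,u_j) = δ_{ij} for all i, j. Moreover S + D is a direct summand of H on which ω is nondegenerate, and H = (S + D) ⊕ (S + D)^⊥; in particular (S + D)^⊥ is the unique submodule T of H with H = (S ⊕ D) ⊕ T and ω(S + D, T) = 0. -/

import Mathlib

namespace Paper

/-- The standard symplectic form on `R^{2g}` with respect to the basis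
`a_1, b_1, …, a_g, b_g` (coordinates `2i, 2i+1` for `a_{i+1}, b_{i+1}`). -/
def symp {R : Type*} [CommRing R] {g : ℕ} (x y : Fin (2 * g) → R) : R :=
  ∑ i : Fin g,
    (x ⟨2 * i.1, by omega⟩ * y ⟨2 * i.1 + 1, by omega⟩ -
      x ⟨2 * i.1 + 1, by omega⟩ * y ⟨2 * i.1, by omega⟩)

theorem symp_add_left {R : Type*} [CommRing R] {g : ℕ} (x y a : Fin (2 * g) → R) :
    symp (x + y) a = symp x a + symp y a := by
  unfold symp
  rw [← Finset.sum_add_distrib]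
  exact Finset.sum_congr rfl fun i _ => by simp only [Pi.add_apply]; ring

theorem symp_smul_left {R : Type*} [CommRing R] {g : ℕ} (c : R) (x a : Fin (2 * g) → R) :
    symp (c • x) a = c * symp x a := by
  unfold symp
  rw [Finset.mul_sum]
  exact Finset.sum_congr rfl fun i _ => by simp only [Pi.smul_apply, smul_eq_mul]; ring

theorem symp_zero_left {R : Type*} [CommRing R] {g : ℕ} (a : Fin (2 * g) → R) :
    symp (0 : Fin (2 * g) → R) a = 0 := by
  unfold symp; simp

/-- The orthogonal complement `A^⊥ = {x | ω(x,a) = 0 for all a ∈ A}`. -/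
def perp {R : Type*} [CommRing R] {g : ℕ} (A : Set (Fin (2 * g) → R)) :
    Submodule R (Fin (2 * g) → R) where
  carrier := {x | ∀ a ∈ A, symp x a = 0}
  add_mem' := by
    intro x y hx hy a ha
    rw [symp_add_left, hx a ha, hy a ha, add_zero]
  zero_mem' := by
    intro a ha
    exact symp_zero_left a
  smul_mem' := by
    intro c x hx a ha
    rw [symp_smul_left, hx a ha, mul_zero]

/-- The submodule of vectors whose first `m` coordinates vanish.
`H_k = coordZero R (2*g) (2*(k-1))`, and `H₂ = coordZero R (2*(g+1)) 2`. -/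
def coordZero (R : Type*) [CommRing R] (n m : ℕ) : Submodule R (Fin n → R) where
  carrier := {v | ∀ j : Fin n, (j : ℕ) < m → v j = 0}
  add_mem' := by
    intro x y hx hy j hj
    have h1 := hx j hj
    have h2 := hy j hj
    simp [Pi.add_apply, h1, h2]
  zero_mem' := by intro j hj; rfl
  smul_mem' := by
    intro c x hx j hj
    have h1 := hx j hj
    simp [Pi.smul_apply, h1]

/-- The standard basis vector `a_{i+1}` (`i` is 0-indexed). -/
def stdA (R : Type*) [CommRing R] (g i : ℕ) : Fin (2 * g) → R :=
  fun j => if (j : ℕ) = 2 * i then 1 else 0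

/-- The standard basis vector `b_{i+1}` (`i` is 0-indexed). -/
def stdB (R : Type*) [CommRing R] (g i : ℕ) : Fin (2 * g) → R :=
  fun j => if (j : ℕ) = 2 * i + 1 then 1 else 0

/-- Regard an integer vector as a rational vector. -/
def qcast {n : ℕ} (v : Fin n → ℤ) : Fin n → ℚ := fun j => (v j : ℚ)

/-- The projection `pr₂` deleting the `a_1`- and `b_1`-coordinates. -/
def pr2 {R : Type*} [CommRing R] {n : ℕ} (v : Fin n → R) : Fin n → R :=
  fun j => if (j : ℕ) < 2 then 0 else v j

/-- `gcd(v_1, …, v_m) = 1`: the vectors are linearly independent and their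
ℤ-span is a direct summand. -/
def IsUnimodular {n m : ℕ} (v : Fin m → Fin n → ℤ) : Prop :=
  LinearIndependent ℤ v ∧
    ∃ C : Submodule ℤ (Fin n → ℤ), IsCompl (Submodule.span ℤ (Set.range v)) C

/-- A primitive vector. -/
def Primitive {n : ℕ} (v : Fin n → ℤ) : Prop := IsUnimodular ![v]

/-- The entries of `w` are pairwise `ω`-orthogonal. -/
def PairwiseOrth {g m : ℕ} (w : Fin m → Fin (2 * g) → ℤ) : Prop :=
  ∀ i j, i ≠ j → symp (w i) (w j) = 0

/-- `Λ³ W`: the span of all wedges of three vectors from `W` inside the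
exterior algebra. -/
def wedge3 {g : ℕ} (W : Submodule ℚ (Fin (2 * g) → ℚ)) :
    Submodule ℚ (ExteriorAlgebra ℚ (Fin (2 * g) → ℚ)) :=
  Submodule.span ℚ {x | ∃ z₁ ∈ W, ∃ z₂ ∈ W, ∃ z₃ ∈ W,
    x = ExteriorAlgebra.ι ℚ z₁ * ExteriorAlgebra.ι ℚ z₂ * ExteriorAlgebra.ι ℚ z₃}

/-- `u ∧ Λ² W`. -/
def uWedge2 {g : ℕ} (u : Fin (2 * g) → ℚ) (W : Submodule ℚ (Fin (2 * g) → ℚ)) :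
    Submodule ℚ (ExteriorAlgebra ℚ (Fin (2 * g) → ℚ)) :=
  Submodule.span ℚ {x | ∃ z₁ ∈ W, ∃ z₂ ∈ W,
    x = ExteriorAlgebra.ι ℚ u * ExteriorAlgebra.ι ℚ z₁ * ExteriorAlgebra.ι ℚ z₂}

/-- `u ∧ u' ∧ W`. -/
def uuWedge1 {g : ℕ} (u u' : Fin (2 * g) → ℚ) (W : Submodule ℚ (Fin (2 * g) → ℚ)) :
    Submodule ℚ (ExteriorAlgebra ℚ (Fin (2 * g) → ℚ)) :=
  Submodule.span ℚ {x | ∃ z ∈ W,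
    x = ExteriorAlgebra.ι ℚ u * ExteriorAlgebra.ι ℚ u' * ExteriorAlgebra.ι ℚ z}

/-- The simplicial differential: on the summand indexed by `w` it sends `z` to
`Σ_j (-1)^j · z` placed in the summand indexed by `∂_j w`. -/
noncomputable def diff (g p : ℕ)
    (ξ : (Fin (p + 1) → Fin (2 * g) → ℤ) →₀ ExteriorAlgebra ℚ (Fin (2 * g) → ℚ)) :
    (Fin p → Fin (2 * g) → ℤ) →₀ ExteriorAlgebra ℚ (Fin (2 * g) → ℚ) :=
  ξ.sum fun w z =>
    ∑ j : Fin (p + 1), ((-1 : ℚ) ^ (j : ℕ)) • Finsupp.single (fun i => w (j.succAbove i)) z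

/-- The gcd of the determinants of all maximal square submatrices of the matrix
whose columns are the `v i`. -/
def vgcd {ι : Type*} [Fintype ι] {m : ℕ} (v : Fin m → ι → ℤ) : ℕ :=
  Finset.univ.gcd fun r : Fin m → ι => (Matrix.det (Matrix.of fun i j => v j (r i))).natAbs


-- ===== auxiliary machinery =====
-- new material
theorem symp_skew {R : Type*} [CommRing R] {g : ℕ} (x y : Fin (2 * g) → R) :
    symp x y = - symp y x := by
  unfold symp
  rw [← Finset.sum_neg_distrib]
  exact Finset.sum_congr rfl fun i _ => by ring

theorem symp_self {R : Type*} [CommRing R] {g : ℕ} (x : Fin (2 * g) → R) :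
    symp x x = 0 := by
  unfold symp; apply Finset.sum_eq_zero; intro i _; ring

theorem symp_add_right {R : Type*} [CommRing R] {g : ℕ} (a x y : Fin (2 * g) → R) :
    symp a (x + y) = symp a x + symp a y := by
  rw [symp_skew, symp_add_left, symp_skew x a, symp_skew y a]; ring

theorem symp_smul_right {R : Type*} [CommRing R] {g : ℕ} (c : R) (a x : Fin (2 * g) → R) :
    symp a (c • x) = c * symp a x := by
  rw [symp_skew, symp_smul_left, symp_skew x a]; ring

theorem symp_zero_right {R : Type*} [CommRing R] {g : ℕ} (a : Fin (2 * g) → R) :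
    symp a (0 : Fin (2 * g) → R) = 0 := by
  rw [symp_skew, symp_zero_left]; ring

/-- `symp` as a linear map in the first argument. -/
def sympL {R : Type*} [CommRing R] {g : ℕ} (y : Fin (2 * g) → R) :
    (Fin (2 * g) → R) →ₗ[R] R where
  toFun x := symp x y
  map_add' a b := symp_add_left a b y
  map_smul' c a := symp_smul_left c a y

@[simp] theorem sympL_apply {R : Type*} [CommRing R] {g : ℕ} (y x : Fin (2 * g) → R) :
    sympL y x = symp x y := rfl

theorem symp_sum_left {R : Type*} [CommRing R] {g : ℕ} {ι : Type*} (s : Finset ι)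
    (f : ι → Fin (2 * g) → R) (y : Fin (2 * g) → R) :
    symp (∑ i ∈ s, f i) y = ∑ i ∈ s, symp (f i) y := by
  exact map_sum (sympL y) f s

theorem symp_sum_right {R : Type*} [CommRing R] {g : ℕ} {ι : Type*} (s : Finset ι)
    (f : ι → Fin (2 * g) → R) (y : Fin (2 * g) → R) :
    symp y (∑ i ∈ s, f i) = ∑ i ∈ s, symp y (f i) := by
  rw [symp_skew, symp_sum_left, ← Finset.sum_neg_distrib]
  exact Finset.sum_congr rfl fun i _ => (symp_skew y (f i)).symm

theorem symp_cast {R S : Type*} [CommRing R] [CommRing S] (h : R →+* S) {g : ℕ}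
    (x y : Fin (2 * g) → R) :
    h (symp x y) = symp (fun i => h (x i)) (fun i => h (y i)) := by
  unfold symp
  rw [map_sum]
  exact Finset.sum_congr rfl fun i _ => by simp


theorem sum_split_nat {M : Type*} [AddCommMonoid M] (g : ℕ) (G : ℕ → M) :
    ∑ j ∈ Finset.range (2 * g), G j = ∑ i ∈ Finset.range g, (G (2 * i) + G (2 * i + 1)) := by
  induction g with
  | zero => simp
  | succ k ih =>
    have h : 2 * (k + 1) = (2 * k) + 1 + 1 := by ring
    rw [h, Finset.sum_range_succ, Finset.sum_range_succ, Finset.sum_range_succ, ih, add_assoc]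

theorem sum_split {M : Type*} [AddCommMonoid M] (g : ℕ) (F : Fin (2 * g) → M) :
    ∑ j, F j = ∑ i : Fin g, (F ⟨2 * i.1, by omega⟩ + F ⟨2 * i.1 + 1, by omega⟩) := by
  classical
  set G : ℕ → M := fun j => if h : j < 2 * g then F ⟨j, h⟩ else 0 with hG
  have h1 : ∑ j, F j = ∑ j ∈ Finset.range (2 * g), G j := by
    rw [← Fin.sum_univ_eq_sum_range]
    exact Finset.sum_congr rfl fun j _ => by simp [hG, j.2]
  have h2 : ∑ i : Fin g, (F ⟨2 * i.1, by omega⟩ + F ⟨2 * i.1 + 1, by omega⟩)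
      = ∑ i ∈ Finset.range g, (G (2 * i) + G (2 * i + 1)) := by
    rw [← Fin.sum_univ_eq_sum_range]
    refine Finset.sum_congr rfl fun i _ => ?_
    have ha : 2 * i.1 < 2 * g := by omega
    have hb : 2 * i.1 + 1 < 2 * g := by omega
    simp [hG, ha, hb]
  rw [h1, h2, sum_split_nat]

/-- The inverse `J` of the symplectic pairing: `symp x (jvec c) = ∑ x j * c j`. -/
def jvec {R : Type*} [CommRing R] {g : ℕ} (c : Fin (2 * g) → R) : Fin (2 * g) → R :=
  fun j => if h : j.1 % 2 = 0 then -c ⟨j.1 + 1, by omega⟩ else c ⟨j.1 - 1, by omega⟩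

theorem symp_jvec {R : Type*} [CommRing R] {g : ℕ} (x c : Fin (2 * g) → R) :
    symp x (jvec c) = ∑ j, x j * c j := by
  rw [sum_split g (fun j => x j * c j)]
  unfold symp jvec
  refine Finset.sum_congr rfl fun i _ => ?_
  have h1 : (2 * i.1) % 2 = 0 := by omega
  have h2 : (2 * i.1 + 1) % 2 = 1 := by omega
  rw [dif_pos h1, dif_neg (by omega : ¬ (2 * i.1 + 1) % 2 = 0)]
  simp only [Nat.add_sub_cancel]
  ring

/-- Every `ℤ`-linear functional is represented by the symplectic form. -/
theorem exists_symp_rep {g : ℕ} (φ : (Fin (2 * g) → ℤ) →ₗ[ℤ] ℤ) :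
    ∃ w, ∀ x, symp x w = φ x := by
  refine ⟨jvec (fun j => φ fun k => if j = k then 1 else 0), fun x => ?_⟩
  rw [symp_jvec, LinearMap.pi_apply_eq_sum_univ φ x]
  exact Finset.sum_congr rfl fun j _ => by simp [mul_comm]

/-- A unimodular family admits a dual family with respect to `symp`. -/
theorem unimodular_duals {g n : ℕ} (v : Fin n → Fin (2 * g) → ℤ) (hv : IsUnimodular v) :
    ∃ q : Fin n → Fin (2 * g) → ℤ, ∀ i j, symp (v i) (q j) = if i = j then 1 else 0 := by
  classical
  obtain ⟨hli, C, hC⟩ := hv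
  set S := Submodule.span ℤ (Set.range v) with hS
  let pr : (Fin (2 * g) → ℤ) →ₗ[ℤ] S := S.linearProjOfIsCompl C hC
  let b : Module.Basis (Fin n) ℤ S := Module.Basis.span hli
  have key : ∀ j, ∃ w, ∀ x, symp x w = (b.coord j ∘ₗ pr) x := fun j =>
    exists_symp_rep _
  choose q hq using key
  refine ⟨q, fun i j => ?_⟩
  rw [hq j (v i)]
  have hb : (b i : Fin (2 * g) → ℤ) = v i := congrArg Subtype.val (Module.Basis.span_apply hli i)
  have : pr (v i) = b i := by
    rw [← hb]
    exact Submodule.linearProjOfIsCompl_apply_left hC (b i)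
  simp only [LinearMap.comp_apply, this, Module.Basis.coord_apply, Module.Basis.repr_self]
  rw [Finsupp.single_apply]


theorem symp_sub_right {R : Type*} [CommRing R] {g : ℕ} (a x y : Fin (2 * g) → R) :
    symp a (x - y) = symp a x - symp a y := by
  have : x - y = x + (-1 : R) • y := by
    rw [neg_one_smul]; abel
  rw [this, symp_add_right, symp_smul_right]; ring

theorem symp_sub_left {R : Type*} [CommRing R] {g : ℕ} (x y a : Fin (2 * g) → R) :
    symp (x - y) a = symp x a - symp y a := by
  rw [symp_skew, symp_sub_right, symp_skew a x, symp_skew a y]; ring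

/-- Descent step for the coset-primitivity lemma. -/
theorem lemB_descend {g : ℕ} (K : Submodule ℤ (Fin (2 * g) → ℤ)) (u₀ : Fin (2 * g) → ℤ)
    (hyp : ∀ p : ℕ, p.Prime →
      (∃ x ∈ K, ¬ (p : ℤ) ∣ symp x u₀) ∨ ∃ x ∈ K, ∃ z ∈ K, ¬ (p : ℤ) ∣ symp x z) :
    ∀ c : ℕ, c ≠ 0 → ∀ z ∈ K,
      Submodule.map (sympL (u₀ + z)) K = Ideal.span {(c : ℤ)} →
      ∃ x ∈ K, ∃ z' ∈ K, symp x (u₀ + z') = 1 := by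
  intro c
  induction c using Nat.strong_induction_on with
  | _ c ih =>
    intro hc0 z hz hI
    rcases eq_or_ne c 1 with hc1 | hc1
    · -- c = 1 : done
      subst hc1
      have h1 : (1 : ℤ) ∈ Submodule.map (sympL (u₀ + z)) K := by
        rw [hI]; simp [Ideal.span_singleton_one]
      obtain ⟨x, hx, hx1⟩ := h1
      exact ⟨x, hx, z, hz, hx1⟩
    · -- c ≥ 2
      set p := c.minFac with hp_def
      have hp : p.Prime := Nat.minFac_prime hc1
      have hpc : p ∣ c := Nat.minFac_dvd c
      have hdvd_all : ∀ x ∈ K, (p : ℤ) ∣ symp x (u₀ + z) := by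
        intro x hx
        have : symp x (u₀ + z) ∈ Submodule.map (sympL (u₀ + z)) K :=
          ⟨x, hx, rfl⟩
        rw [hI, Ideal.mem_span_singleton] at this
        exact dvd_trans (Int.natCast_dvd_natCast.mpr hpc) this
      -- find x y ∈ K with p ∤ symp x y
      have hxy : ∃ x ∈ K, ∃ y ∈ K, ¬ (p : ℤ) ∣ symp x y := by
        rcases hyp p hp with ⟨x, hx, hxu⟩ | h
        · refine ⟨x, hx, z, hz, fun hctr => hxu ?_⟩
          have h2 := hdvd_all x hx
          rw [symp_add_right] at h2
          have := dvd_sub h2 hctr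
          simpa using this
        · exact h
      obtain ⟨x, hx, y, hy, hpxy⟩ := hxy
      -- get x₀ with symp x₀ (u₀ + z) = c
      have hcmem : (c : ℤ) ∈ Submodule.map (sympL (u₀ + z)) K := by
        rw [hI]; exact Ideal.subset_span rfl
      obtain ⟨x₀, hx₀, hx₀c⟩ := hcmem
      simp only [sympL_apply] at hx₀c
      -- construct w ∈ K with symp x₀ w = 0 and ξ ∈ K with p ∤ symp ξ w
      have hw : ∃ w ∈ K, symp x₀ w = 0 ∧ ∃ ξ ∈ K, ¬ (p : ℤ) ∣ symp ξ w := by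
        rcases eq_or_ne (symp x₀ y) 0 with ht0 | ht0
        · exact ⟨y, hy, ht0, x, hx, hpxy⟩
        · obtain ⟨s, t, e, hs_def, ht_def, he_def⟩ :
            ∃ s t e, s = symp x₀ x ∧ t = symp x₀ y ∧ e = Int.gcd s t :=
            ⟨_, _, _, rfl, rfl, rfl⟩
          have he0 : e ≠ 0 := by
            rw [he_def]
            intro h
            exact ht0 (ht_def ▸ (Int.gcd_eq_zero_iff.mp h).2)
          have hse : s = (s / e) * e := by
            refine (Int.ediv_mul_cancel ?_).symm
            rw [he_def]; exact Int.gcd_dvd_left s t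
          have hte : t = (t / e) * e := by
            refine (Int.ediv_mul_cancel ?_).symm
            rw [he_def]; exact Int.gcd_dvd_right s t
          have hcop : Int.gcd (s / e) (t / e) = 1 := by
            rw [he_def]
            apply Int.gcd_div_gcd_div_gcd
            have h6 : Int.gcd s t ≠ 0 := by
              intro h
              exact ht0 (ht_def ▸ (Int.gcd_eq_zero_iff.mp h).2)
            omega
          refine ⟨(t / e) • x - (s / e) • y, sub_mem (K.smul_mem _ hx) (K.smul_mem _ hy), ?_, ?_⟩
          · rw [symp_sub_right, symp_smul_right, symp_smul_right, ← hs_def, ← ht_def]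
            have h5 : (t / e) * s = (s / e) * t := by
              conv_lhs => rw [hse]
              conv_rhs => rw [hte]
              ring
            rw [h5]; ring
          · have hnot : ¬ (p : ℤ) ∣ (s / e) ∨ ¬ (p : ℤ) ∣ (t / e) := by
              by_contra hcon
              push_neg at hcon
              have h1 : (p : ℤ) ∣ (Int.gcd (s / e) (t / e) : ℤ) :=
                Int.dvd_coe_gcd hcon.1 hcon.2
              rw [hcop] at h1
              have h2 := Int.le_of_dvd one_pos h1
              have hp2 := hp.two_le
              exact absurd h2 (by push_cast; omega)
            rcases hnot with hns | hnt
            · refine ⟨x, hx, ?_⟩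
              rw [symp_sub_right, symp_smul_right, symp_smul_right, symp_self]
              intro hctr
              rw [mul_zero, zero_sub, dvd_neg] at hctr
              rcases (Nat.prime_iff_prime_int.mp hp).dvd_mul.mp hctr with h | h
              · exact hns h
              · exact hpxy h
            · refine ⟨y, hy, ?_⟩
              rw [symp_sub_right, symp_smul_right, symp_smul_right, symp_self]
              intro hctr
              rw [mul_zero, sub_zero] at hctr
              rcases (Nat.prime_iff_prime_int.mp hp).dvd_mul.mp hctr with h | h
              · exact hnt h
              · rw [symp_skew] at hpxy
                exact hpxy (by simpa using dvd_neg.mpr h)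
      obtain ⟨w, hwK, hw0, ξ, hξ, hpξw⟩ := hw
      -- new shift z + w, new ideal
      have hzw : z + w ∈ K := add_mem hz hwK
      set I'' := Submodule.map (sympL (u₀ + (z + w))) K with hI''_def
      obtain ⟨d, hd⟩ := (inferInstance : I''.IsPrincipal)
      set c'' := d.natAbs with hc''_def
      have hI'' : I'' = Ideal.span {(c'' : ℤ)} := by
        rw [hd, hc''_def]
        exact (Ideal.span_singleton_eq_span_singleton.mpr (Int.associated_natAbs d).symm).symm
      have hmem'' : ∀ x' ∈ K, symp x' (u₀ + (z + w)) ∈ I'' := fun x' hx' => ⟨x', hx', rfl⟩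
      -- (i) c ∈ I''
      have hcI : (c : ℤ) ∈ I'' := by
        have h1 := hmem'' x₀ hx₀
        have h2 : symp x₀ (u₀ + (z + w)) = (c : ℤ) := by
          have : u₀ + (z + w) = (u₀ + z) + w := by ring
          rw [this, symp_add_right, hx₀c, hw0, add_zero]
        rwa [h2] at h1
      have hdvd_c : (c'' : ℤ) ∣ (c : ℤ) := by
        rwa [hI'', Ideal.mem_span_singleton] at hcI
      -- (ii) p ∤ c''
      have hpnc : ¬ (p : ℤ) ∣ (c'' : ℤ) := by
        intro hctr
        have h1 := hmem'' ξ hξ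
        rw [hI'', Ideal.mem_span_singleton] at h1
        have h2 : (p : ℤ) ∣ symp ξ (u₀ + (z + w)) := dvd_trans hctr h1
        have h3 : symp ξ (u₀ + (z + w)) = symp ξ (u₀ + z) + symp ξ w := by
          have : u₀ + (z + w) = (u₀ + z) + w := by ring
          rw [this, symp_add_right]
        rw [h3] at h2
        exact hpξw ((dvd_add_right (hdvd_all ξ hξ)).mp h2)
      -- (iii) c'' ≠ 0
      have hc''0 : c'' ≠ 0 := by
        intro h0
        rw [h0] at hdvd_c
        simp only [Nat.cast_zero, zero_dvd_iff, Nat.cast_eq_zero] at hdvd_c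
        exact hc0 hdvd_c
      -- (iv) c'' < c
      have hlt : c'' < c := by
        have hdvd : c'' ∣ c := Int.natCast_dvd_natCast.mp hdvd_c
        have hne : c'' ≠ c := by
          intro h
          rw [h] at hpnc
          exact hpnc (Int.natCast_dvd_natCast.mpr hpc)
        exact lt_of_le_of_ne (Nat.le_of_dvd (Nat.pos_of_ne_zero hc0) hdvd) hne
      exact ih c'' hlt hc''0 (z + w) hzw hI''

/-- The coset-primitivity lemma: if for every prime `p` either `symp · u₀` is not
identically divisible by `p` on `K`, or the form on `K` is not identically divisible
by `p`, then `ω(x, u₀ + z) = 1` has a solution with `x, z ∈ K`. -/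
theorem lemB {g : ℕ} (K : Submodule ℤ (Fin (2 * g) → ℤ)) (u₀ : Fin (2 * g) → ℤ)
    (hyp : ∀ p : ℕ, p.Prime →
      (∃ x ∈ K, ¬ (p : ℤ) ∣ symp x u₀) ∨ ∃ x ∈ K, ∃ z ∈ K, ¬ (p : ℤ) ∣ symp x z) :
    ∃ x ∈ K, ∃ z ∈ K, symp x (u₀ + z) = 1 := by
  classical
  -- find a starting shift z₀ with nonzero ideal
  have hstart : ∃ z₀ ∈ K, ∃ x ∈ K, symp x (u₀ + z₀) ≠ 0 := by
    by_cases h0 : ∀ x ∈ K, symp x u₀ = 0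
    · rcases hyp 2 Nat.prime_two with ⟨x, hx, hxu⟩ | ⟨x, hx, y, hy, hxy⟩
      · exact absurd (h0 x hx ▸ dvd_zero 2) hxu
      · refine ⟨y, hy, x, hx, ?_⟩
        rw [symp_add_right, h0 x hx, zero_add]
        intro h; rw [h] at hxy; exact hxy (dvd_zero _)
    · push_neg at h0
      obtain ⟨x, hx, hxu⟩ := h0
      exact ⟨0, K.zero_mem, x, hx, by rwa [add_zero]⟩
  obtain ⟨z₀, hz₀, x₁, hx₁, hx₁0⟩ := hstart
  obtain ⟨d, hd⟩ := (inferInstance :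
    (Submodule.map (sympL (u₀ + z₀)) K).IsPrincipal)
  have hI : Submodule.map (sympL (u₀ + z₀)) K = Ideal.span {(d.natAbs : ℤ)} := by
    rw [hd]
    exact (Ideal.span_singleton_eq_span_singleton.mpr (Int.associated_natAbs d).symm).symm
  have hd0 : d.natAbs ≠ 0 := by
    intro h
    have h1 : symp x₁ (u₀ + z₀) ∈ Submodule.map (sympL (u₀ + z₀)) K := ⟨x₁, hx₁, rfl⟩
    rw [hI, h, Nat.cast_zero, Ideal.span_singleton_eq_bot.mpr rfl] at h1
    exact hx₁0 (by simpa using h1)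
  exact lemB_descend K u₀ hyp d.natAbs hd0 z₀ hz₀ hI

/-- `symp` as a linear map in the second argument. -/
def sympR {R : Type*} [CommRing R] {g : ℕ} (w : Fin (2 * g) → R) :
    (Fin (2 * g) → R) →ₗ[R] R where
  toFun x := symp w x
  map_add' a b := symp_add_right w a b
  map_smul' c a := symp_smul_right c w a

@[simp] theorem sympR_apply {R : Type*} [CommRing R] {g : ℕ} (w x : Fin (2 * g) → R) :
    sympR w x = symp w x := rfl

theorem symp_single_even {R : Type*} [CommRing R] {g : ℕ} (k : ℕ) (hk : k < g)
    (w : Fin (2 * g) → R) :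
    symp (Pi.single (⟨2 * k, by omega⟩ : Fin (2 * g)) (1 : R)) w = w ⟨2 * k + 1, by omega⟩ := by
  classical
  unfold symp
  rw [Finset.sum_eq_single (⟨k, hk⟩ : Fin g)]
  · have e1 : ((⟨2 * k, by omega⟩ : Fin (2 * g)) = ⟨2 * k, by omega⟩) := rfl
    have e2 : ¬ ((⟨2 * k + 1, by omega⟩ : Fin (2 * g)) = ⟨2 * k, by omega⟩) := by
      simp [Fin.ext_iff]
    simp [Pi.single_apply, e2]
  · intro l _ hl
    have hlk : l.1 ≠ k := fun h => hl (Fin.ext h)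
    have e1 : ¬ ((⟨2 * l.1, by omega⟩ : Fin (2 * g)) = ⟨2 * k, by omega⟩) := by
      simp [Fin.ext_iff]; omega
    have e2 : ¬ ((⟨2 * l.1 + 1, by omega⟩ : Fin (2 * g)) = ⟨2 * k, by omega⟩) := by
      simp [Fin.ext_iff]; omega
    simp [Pi.single_apply, e1, e2]
  · intro h; exact absurd (Finset.mem_univ _) h

theorem symp_single_odd {R : Type*} [CommRing R] {g : ℕ} (k : ℕ) (hk : k < g)
    (w : Fin (2 * g) → R) :
    symp (Pi.single (⟨2 * k + 1, by omega⟩ : Fin (2 * g)) (1 : R)) w = - w ⟨2 * k, by omega⟩ := by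
  classical
  unfold symp
  rw [Finset.sum_eq_single (⟨k, hk⟩ : Fin g)]
  · have e2 : ¬ ((⟨2 * k, by omega⟩ : Fin (2 * g)) = ⟨2 * k + 1, by omega⟩) := by
      simp [Fin.ext_iff]
    simp [Pi.single_apply, e2]
  · intro l _ hl
    have hlk : l.1 ≠ k := fun h => hl (Fin.ext h)
    have e1 : ¬ ((⟨2 * l.1, by omega⟩ : Fin (2 * g)) = ⟨2 * k + 1, by omega⟩) := by
      simp [Fin.ext_iff]; omega
    have e2 : ¬ ((⟨2 * l.1 + 1, by omega⟩ : Fin (2 * g)) = ⟨2 * k + 1, by omega⟩) := by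
      simp [Fin.ext_iff]; omega
    simp [Pi.single_apply, e1, e2]
  · intro h; exact absurd (Finset.mem_univ _) h

/-- The symplectic form is (left-)nondegenerate. -/
theorem symp_nondeg {R : Type*} [CommRing R] {g : ℕ} (w : Fin (2 * g) → R)
    (h : ∀ x, symp x w = 0) : w = 0 := by
  classical
  funext j
  rcases Nat.even_or_odd j.1 with ⟨k, hk⟩ | ⟨k, hk⟩
  · have hkg : k < g := by omega
    have h1 := h (Pi.single (⟨2 * k + 1, by omega⟩ : Fin (2 * g)) (1 : R))
    rw [symp_single_odd k hkg w] at h1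
    have hj : j = ⟨2 * k, by omega⟩ := Fin.ext (by simp; omega)
    rw [hj]
    simpa using neg_eq_zero.mp h1
  · have hkg : k < g := by omega
    have h1 := h (Pi.single (⟨2 * k, by omega⟩ : Fin (2 * g)) (1 : R))
    rw [symp_single_even k hkg w] at h1
    have hj : j = ⟨2 * k + 1, by omega⟩ := Fin.ext (by simp; omega)
    rw [hj]
    simpa using h1

/-- The joint kernel of pairing against `v_0, …, v_{n-1}, u_0, …, u_{r-1}`. -/
def Ksub {g : ℕ} (n r : ℕ) (v u : ℕ → Fin (2 * g) → ℤ) : Submodule ℤ (Fin (2 * g) → ℤ) where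
  carrier := {x | (∀ i < n, symp (v i) x = 0) ∧ ∀ j < r, symp (u j) x = 0}
  add_mem' := by
    rintro x y ⟨hx1, hx2⟩ ⟨hy1, hy2⟩
    constructor
    · intro i hi; rw [symp_add_right, hx1 i hi, hy1 i hi, add_zero]
    · intro j hj; rw [symp_add_right, hx2 j hj, hy2 j hj, add_zero]
  zero_mem' := by
    constructor
    · intro i _; exact symp_zero_right _
    · intro j _; exact symp_zero_right _
  smul_mem' := by
    rintro c x ⟨hx1, hx2⟩
    constructor
    · intro i hi
      rw [show c • x = (c : ℤ) • x from rfl, symp_smul_right, hx1 i hi, mul_zero]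
    · intro j hj
      rw [show c • x = (c : ℤ) • x from rfl, symp_smul_right, hx2 j hj, mul_zero]

theorem mem_Ksub {g : ℕ} {n r : ℕ} {v u : ℕ → Fin (2 * g) → ℤ} {x : Fin (2 * g) → ℤ} :
    x ∈ Ksub n r v u ↔ (∀ i < n, symp (v i) x = 0) ∧ ∀ j < r, symp (u j) x = 0 :=
  Iff.rfl

set_option maxHeartbeats 1000000 in
/-- The key counting argument: if `n ≤ g`, `r < n`, the partial system has dual
vectors, and `u₀` is a particular solution, then no prime `p` can divide both the
form restricted to `K` and the pairing of `K` with `u₀`. -/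
theorem modp_contra {g n r : ℕ} (hn : n ≤ g) (hr : r < n) (v u : ℕ → Fin (2 * g) → ℤ)
    (hvu : ∀ i < n, ∀ j < r, symp (v i) (u j) = if i = j then 1 else 0)
    (huu : ∀ i < r, ∀ j < r, symp (u i) (u j) = 0)
    (hds : ∀ t : ℕ → ℤ, ∃ x, (∀ i < n, symp (v i) x = t i) ∧ ∀ j < r, symp (u j) x = t (n + j))
    (u₀ : Fin (2 * g) → ℤ)
    (hu₀v : ∀ i < n, symp (v i) u₀ = if i = r then 1 else 0)
    (hu₀u : ∀ j < r, symp (u j) u₀ = 0)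
    (p : ℕ) (hp : p.Prime)
    (hF2 : ∀ x ∈ Ksub n r v u, (p : ℤ) ∣ symp x u₀)
    (hF1 : ∀ x ∈ Ksub n r v u, ∀ z ∈ Ksub n r v u, (p : ℤ) ∣ symp x z) : False := by
  classical
  haveI : Fact p.Prime := ⟨hp⟩
  haveI : NeZero p := ⟨hp.pos.ne'⟩
  set F := ZMod p with hF_def
  set N := n + r with hN_def
  -- the combined integral family
  set C : ℕ → Fin (2 * g) → ℤ := fun a => if a < n then v a else u (a - n) with hC_def
  -- reduction mod p
  set red : (Fin (2 * g) → ℤ) → (Fin (2 * g) → F) := fun x i => ((x i : ℤ) : F) with hred_def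
  have cast_symp : ∀ x y : Fin (2 * g) → ℤ,
      ((symp x y : ℤ) : F) = symp (red x) (red y) := fun x y =>
    symp_cast (Int.castRingHom F) x y
  -- dual vectors over ℤ
  have hqex : ∀ b : ℕ, ∃ x, (∀ i < n, symp (v i) x = if i = b then 1 else 0) ∧
      ∀ j < r, symp (u j) x = if n + j = b then 1 else 0 := by
    intro b
    obtain ⟨x, hx1, hx2⟩ := hds (fun a => if a = b then 1 else 0)
    exact ⟨x, hx1, hx2⟩
  choose q hq1 hq2 using hqex
  have hCq : ∀ a < N, ∀ b : ℕ, symp (C a) (q b) = if a = b then 1 else 0 := by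
    intro a ha b
    by_cases han : a < n
    · simp only [hC_def, if_pos han]
      exact hq1 b a han
    · simp only [hC_def, if_neg han]
      have h1 := hq2 b (a - n) (by omega)
      have h2 : n + (a - n) = a := by omega
      rwa [h2] at h1
  have hCu : ∀ a < N, ∀ j < r, symp (C a) (u j) = if a = j then 1 else 0 := by
    intro a ha j hj
    by_cases han : a < n
    · simp only [hC_def, if_pos han]
      exact hvu a han j hj
    · simp only [hC_def, if_neg han]
      rw [huu (a - n) (by omega) j hj, eq_comm]
      have : ¬ a = j := by omega
      simp [this]
  have hCu₀ : ∀ a < N, symp (C a) u₀ = if a = r then 1 else 0 := by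
    intro a ha
    by_cases han : a < n
    · simp only [hC_def, if_pos han]
      exact hu₀v a han
    · simp only [hC_def, if_neg han]
      rw [hu₀u (a - n) (by omega), eq_comm]
      have : ¬ a = r := by omega
      simp [this]
  have hKiff : ∀ x, x ∈ Ksub n r v u ↔ ∀ a < N, symp (C a) x = 0 := by
    intro x
    constructor
    · rintro ⟨h1, h2⟩ a ha
      by_cases han : a < n
      · simp only [hC_def, if_pos han]; exact h1 a han
      · simp only [hC_def, if_neg han]; exact h2 (a - n) (by omega)
    · intro h
      constructor
      · intro i hi
        have := h i (by omega)
        simpa only [hC_def, if_pos hi] using this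
      · intro j hj
        have := h (n + j) (by omega)
        have h2 : ¬ n + j < n := by omega
        have h3 : n + j - n = j := by omega
        simpa only [hC_def, if_neg h2, h3] using this
  -- mod-p families
  set Cb : ℕ → Fin (2 * g) → F := fun a => red (C a) with hCb_def
  set qb : ℕ → Fin (2 * g) → F := fun b => red (q b) with hqb_def
  have castIte : ∀ (c : Prop) [Decidable c], (((if c then 1 else 0 : ℤ)) : F) = if c then 1 else 0 := by
    intro c hc; split_ifs <;> simp
  have fCq : ∀ a < N, ∀ b : ℕ, symp (Cb a) (qb b) = if a = b then (1 : F) else 0 := by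
    intro a ha b
    rw [hCb_def, hqb_def, ← cast_symp, hCq a ha b, castIte]
  -- the pairing map and its kernel
  set Φ : (Fin (2 * g) → F) →ₗ[F] (Fin N → F) :=
    LinearMap.pi (fun a : Fin N => sympR (Cb a.1)) with hΦ_def
  set L := LinearMap.ker Φ with hL_def
  have mem_L : ∀ x, x ∈ L ↔ ∀ a : Fin N, symp (Cb a.1) x = 0 := by
    intro x
    rw [hL_def, LinearMap.mem_ker, hΦ_def]
    constructor
    · intro h a
      have := congrFun h a
      simpa using this
    · intro h
      funext a
      simpa using h a
  -- lifting elements of L to K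
  have hlift : ∀ x ∈ L, ∃ k ∈ Ksub n r v u, red k = x := by
    intro xb hxb
    set xl : Fin (2 * g) → ℤ := fun i => ((xb i).val : ℤ) with hxl_def
    have hredxl : red xl = xb := by
      funext i
      simp only [hred_def, hxl_def, Int.cast_natCast]
      exact ZMod.natCast_rightInverse (xb i)
    have hdvd : ∀ a < N, (p : ℤ) ∣ symp (C a) xl := by
      intro a ha
      rw [← ZMod.intCast_zmod_eq_zero_iff_dvd, cast_symp, hredxl]
      exact (mem_L xb).mp hxb ⟨a, ha⟩
    obtain ⟨y, hy1, hy2⟩ := hds (fun a => symp (C a) xl / p)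
    have hyC : ∀ a < N, symp (C a) y = symp (C a) xl / p := by
      intro a ha
      by_cases han : a < n
      · simpa only [hC_def, if_pos han] using hy1 a han
      · have h3 : n + (a - n) = a := by omega
        have h5 := hy2 (a - n) (by omega)
        rw [h3] at h5
        simpa only [hC_def, if_neg han] using h5
    refine ⟨xl - (p : ℤ) • y, ?_, ?_⟩
    · rw [hKiff]
      intro a ha
      rw [symp_sub_right, symp_smul_right, hyC a ha,
        Int.mul_ediv_cancel' (hdvd a ha), sub_self]
    · funext i
      have h1 := congrFun hredxl i
      simp only [hred_def] at h1 ⊢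
      have hp0 : ((p : ℕ) : F) = 0 := ZMod.natCast_self p
      simp only [Pi.sub_apply, Pi.smul_apply, smul_eq_mul, Int.cast_sub, Int.cast_mul,
        Int.cast_natCast, hp0, zero_mul, sub_zero]
      have hz : ((((p : ℤ) * y i : ℤ)) : F) = 0 :=
        (ZMod.intCast_zmod_eq_zero_iff_dvd _ p).mpr (dvd_mul_right _ _)
      rw [hz, sub_zero]
      exact h1
  -- isotropy of L mod p, and orthogonality to u₀
  have hLiso : ∀ x ∈ L, ∀ y ∈ L, symp x y = 0 := by
    intro x hx y hy
    obtain ⟨k, hk, hkred⟩ := hlift x hx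
    obtain ⟨k', hk', hk'red⟩ := hlift y hy
    rw [← hkred, ← hk'red, ← cast_symp, ZMod.intCast_zmod_eq_zero_iff_dvd]
    exact hF1 k hk k' hk'
  have hLu₀ : ∀ x ∈ L, symp x (red u₀) = 0 := by
    intro x hx
    obtain ⟨k, hk, hkred⟩ := hlift x hx
    rw [← hkred, ← cast_symp, ZMod.intCast_zmod_eq_zero_iff_dvd]
    exact hF2 k hk
  -- representation of vectors orthogonal to L
  have hrep : ∀ w : Fin (2 * g) → F, (∀ y ∈ L, symp y w = 0) →
      w = ∑ b ∈ Finset.range N, (-(symp (qb b) w)) • Cb b := by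
    intro w hw
    have key : ∀ x, symp x (w - ∑ b ∈ Finset.range N, (-(symp (qb b) w)) • Cb b) = 0 := by
      intro x
      have hyL : x - ∑ a ∈ Finset.range N, (symp (Cb a) x) • qb a ∈ L := by
        rw [mem_L]
        intro b
        rw [symp_sub_right, symp_sum_right]
        have hsum : ∑ a ∈ Finset.range N, symp (Cb b.1) ((symp (Cb a) x) • qb a)
            = symp (Cb b.1) x := by
          rw [Finset.sum_eq_single b.1]
          · rw [symp_smul_right, fCq b.1 b.2 b.1, if_pos rfl, mul_one]
          · intro a ha hab
            rw [symp_smul_right, fCq b.1 b.2 a, if_neg (fun h => hab h.symm), mul_zero]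
          · intro hb
            exact absurd (Finset.mem_range.mpr b.2) hb
        rw [hsum, sub_self]
      have h0 := hw _ hyL
      rw [symp_sub_left, symp_sum_left] at h0
      have h1 : symp x w = ∑ a ∈ Finset.range N, (symp (Cb a) x) * symp (qb a) w := by
        have := sub_eq_zero.mp h0
        rw [this]
        exact Finset.sum_congr rfl fun a _ => by rw [symp_smul_left]
      rw [symp_sub_right, symp_sum_right, h1]
      rw [← Finset.sum_sub_distrib]
      apply Finset.sum_eq_zero
      intro a _
      rw [symp_smul_right]
      rw [symp_skew x (Cb a)]
      ring
    have := symp_nondeg _ (fun x => key x)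
    exact sub_eq_zero.mp this
  -- expansion of pairings against a represented vector
  have hexp : ∀ w : Fin (2 * g) → F,
      w = ∑ b ∈ Finset.range N, (-(symp (qb b) w)) • Cb b →
      ∀ cv, symp cv w = ∑ b ∈ Finset.range N, (-(symp (qb b) w)) * symp cv (Cb b) := by
    intro w hwrep cv
    conv_lhs => rw [hwrep]
    rw [symp_sum_right]
    exact Finset.sum_congr rfl fun b _ => by rw [symp_smul_right]
  -- vanishing of the low v-coefficients
  have hlam_lo : ∀ w : Fin (2 * g) → F,
      (w = ∑ b ∈ Finset.range N, (-(symp (qb b) w)) • Cb b) →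
      (∀ a < r, symp (Cb (n + a)) w = 0) →
      ∀ a < r, symp (qb a) w = 0 := by
    intro w hwrep hu a ha
    have h0 := hu a ha
    rw [hexp w hwrep (Cb (n + a))] at h0
    have hCC : ∀ b < N, symp (Cb (n + a)) (Cb b) = -(if b = a then 1 else 0) := by
      intro b hb
      rw [hCb_def, symp_skew]
      rw [← cast_symp]
      have h2 : symp (C b) (C (n + a)) = if b = a then 1 else 0 := by
        have h3 : ¬ n + a < n := by omega
        have h4 : n + a - n = a := by omega
        have := hCu b hb a ha
        simp only [hC_def] at this ⊢
        rw [if_neg h3, h4]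
        exact this
      rw [h2, castIte]
    rw [Finset.sum_eq_single a] at h0
    · rw [hCC a (by omega), if_pos rfl] at h0
      simpa using h0
    · intro b hb hba
      rw [hCC b (Finset.mem_range.mp hb), if_neg hba, neg_zero, mul_zero]
    · intro h
      exact absurd (Finset.mem_range.mpr (by omega : a < N)) h
  -- the second pairing map
  set Θ : L →ₗ[F] (Fin (n - r) → F) :=
    LinearMap.pi (fun i : Fin (n - r) => (sympR (qb (r + i.1))) ∘ₗ L.subtype) with hΘ_def
  have hΘ_apply : ∀ (x : L) (i : Fin (n - r)), Θ x i = symp (qb (r + i.1)) (x : Fin (2 * g) → F) :=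
    fun x i => rfl
  -- membership facts for elements of L
  have hLmem_pair : ∀ x ∈ L, ∀ a < N, symp (Cb a) x = 0 := by
    intro x hx a ha
    exact (mem_L x).mp hx ⟨a, ha⟩
  have hLrep : ∀ x ∈ L, x = ∑ b ∈ Finset.range N, (-(symp (qb b) x)) • Cb b := by
    intro x hx
    exact hrep x (fun y hy => hLiso y hy x hx)
  have hLlam_lo : ∀ x ∈ L, ∀ a < r, symp (qb a) x = 0 := by
    intro x hx a ha
    exact hlam_lo x (hLrep x hx) (fun a' ha' => hLmem_pair x hx (n + a') (by omega)) a ha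
  -- injectivity of Θ
  have hΘinj : Function.Injective Θ := by
    rw [← LinearMap.ker_eq_bot]
    rw [Submodule.eq_bot_iff]
    rintro ⟨x, hxL⟩ hx0
    rw [LinearMap.mem_ker] at hx0
    have hlam_hi : ∀ b, r ≤ b → b < n → symp (qb b) x = 0 := by
      intro b hb1 hb2
      have := congrFun hx0 ⟨b - r, by omega⟩
      rw [hΘ_apply] at this
      have h2 : r + (b - r) = b := by omega
      rw [h2] at this
      exact this
    have hlam_u : ∀ j < r, symp (qb (n + j)) x = 0 := by
      intro j hj
      have h0 := hLmem_pair x hxL j (by omega)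
      rw [hexp x (hLrep x hxL) (Cb j)] at h0
      rw [Finset.sum_eq_single (n + j)] at h0
      · have hpair : symp (Cb j) (Cb (n + j)) = 1 := by
          rw [hCb_def, ← cast_symp]
          have h4 := hCu j (by omega) j hj
          rw [if_pos rfl] at h4
          have h5 : C (n + j) = u j := by
            simp only [hC_def, if_neg (by omega : ¬ n + j < n)]
            rw [show n + j - n = j from by omega]
          rw [h5, h4]; simp
        rw [hpair, mul_one] at h0
        exact neg_eq_zero.mp h0
      · intro b hb hbne
        rcases Nat.lt_or_ge b n with hbn | hbn
        · rcases Nat.lt_or_ge b r with hbr | hbr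
          · rw [hLlam_lo x hxL b hbr, neg_zero, zero_mul]
          · rw [hlam_hi b hbr hbn, neg_zero, zero_mul]
        · have hbN := Finset.mem_range.mp hb
          have hpair : symp (Cb j) (Cb b) = 0 := by
            rw [hCb_def, ← cast_symp]
            have h4 := hCu j (by omega) (b - n) (by omega)
            rw [if_neg (by omega)] at h4
            have h5 : C b = u (b - n) := by
              simp only [hC_def, if_neg (by omega : ¬ b < n)]
            rw [h5, h4]; simp
          rw [hpair, mul_zero]
      · intro h
        exact absurd (Finset.mem_range.mpr (by omega : n + j < N)) h
    have : x = 0 := by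
      rw [hLrep x hxL]
      apply Finset.sum_eq_zero
      intro b hb
      have hbN := Finset.mem_range.mp hb
      rcases Nat.lt_or_ge b n with hbn | hbn
      · rcases Nat.lt_or_ge b r with hbr | hbr
        · rw [hLlam_lo x hxL b hbr, neg_zero, zero_smul]
        · rw [hlam_hi b hbr hbn, neg_zero, zero_smul]
      · have h4 : n + (b - n) = b := by omega
        have := hlam_u (b - n) (by omega)
        rw [h4] at this
        rw [this, neg_zero, zero_smul]
    exact Subtype.ext this
  -- rank computation
  have hVrank : Module.finrank F (Fin (2 * g) → F) = 2 * g := by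
    rw [Module.finrank_pi]
    exact Fintype.card_fin _
  have hrank_nullity := LinearMap.finrank_range_add_finrank_ker Φ
  rw [← hL_def] at hrank_nullity
  have hrange_le : Module.finrank F (LinearMap.range Φ) ≤ N := by
    have h1 := Submodule.finrank_le (LinearMap.range Φ)
    rwa [Module.finrank_pi, Fintype.card_fin] at h1
  have hLlow : Module.finrank F L + N ≥ 2 * g := by
    rw [hVrank] at hrank_nullity
    omega
  have hLhigh : Module.finrank F L ≤ n - r := by
    have h1 := LinearMap.finrank_le_finrank_of_injective hΘinj
    rwa [Module.finrank_pi, Fintype.card_fin] at h1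
  have hng : n = g := by omega
  have hLrank : Module.finrank F L = n - r := by omega
  have hΘsurj : Function.Surjective Θ := by
    have h1 : Module.finrank F L = Module.finrank F (Fin (n - r) → F) := by
      rw [Module.finrank_pi, Fintype.card_fin, hLrank]
    exact (LinearMap.injective_iff_surjective_of_finrank_eq_finrank h1).mp hΘinj
  -- vanishing of the high Gram matrix
  have hAbar : ∀ i', r ≤ i' → i' < n → ∀ i, r ≤ i → i < n →
      symp (Cb i') (Cb i) = 0 := by
    intro i' hi'1 hi'2 i hi1 hi2
    obtain ⟨⟨x, hxL⟩, hxs⟩ := hΘsurj (Pi.single (⟨i - r, by omega⟩ : Fin (n - r)) (1 : F))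
    have hlam_hi : ∀ b, r ≤ b → b < n → symp (qb b) x = if b = i then 1 else 0 := by
      intro b hb1 hb2
      have := congrFun hxs ⟨b - r, by omega⟩
      rw [hΘ_apply] at this
      have h2 : r + (b - r) = b := by omega
      rw [h2] at this
      rw [this, Pi.single_apply]
      have heq : ((⟨b - r, by omega⟩ : Fin (n - r)) = ⟨i - r, by omega⟩) ↔ b = i := by
        rw [Fin.mk.injEq]
        omega
      simp only [heq]
    have h0 := hLmem_pair x hxL i' (by omega)
    rw [hexp x (hLrep x hxL) (Cb i')] at h0
    rw [Finset.sum_eq_single i] at h0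
    · rw [hlam_hi i hi1 hi2, if_pos rfl] at h0
      have h2 : symp (Cb i') (Cb i) = 0 := by
        have h3 : (-1 : F) * symp (Cb i') (Cb i) = 0 := by
          simpa using h0
        have := mul_eq_zero.mp h3
        rcases this with h | h
        · exact absurd h (by norm_num)
        · exact h
      exact h2
    · intro b hb hbne
      have hbN := Finset.mem_range.mp hb
      rcases Nat.lt_or_ge b n with hbn | hbn
      · rcases Nat.lt_or_ge b r with hbr | hbr
        · rw [hLlam_lo x hxL b hbr, neg_zero, zero_mul]
        · rw [hlam_hi b hbr hbn, if_neg hbne, neg_zero, zero_mul]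
      · have hpair : symp (Cb i') (Cb b) = 0 := by
          rw [hCb_def, ← cast_symp]
          have h4 := hCu i' (by omega) (b - n) (by omega)
          rw [if_neg (by omega)] at h4
          have h5 : C b = u (b - n) := by
            simp only [hC_def, if_neg (by omega : ¬ b < n)]
          rw [h5, h4]; simp
        rw [hpair, mul_zero]
    · intro h
      exact absurd (Finset.mem_range.mpr (by omega : i < N)) h
  -- final contradiction using u₀
  have hub_rep : red u₀ = ∑ b ∈ Finset.range N, (-(symp (qb b) (red u₀))) • Cb b :=
    hrep (red u₀) (fun y hy => hLu₀ y hy)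
  have hub_lo : ∀ a < r, symp (qb a) (red u₀) = 0 := by
    apply hlam_lo (red u₀) hub_rep
    intro a ha
    rw [hCb_def, ← cast_symp]
    have h3 : ¬ n + a < n := by omega
    have h4 : n + a - n = a := by omega
    simp only [hC_def, if_neg h3, h4]
    rw [hu₀u a ha]
    simp
  have hfinal : (1 : F) = 0 := by
    have h1 : symp (Cb r) (red u₀) = 1 := by
      rw [hCb_def, ← cast_symp, hCu₀ r (by omega), if_pos rfl]
      simp
    rw [hexp (red u₀) hub_rep (Cb r)] at h1
    rw [← h1]
    apply Finset.sum_eq_zero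
    intro b hb
    have hbN := Finset.mem_range.mp hb
    rcases Nat.lt_or_ge b n with hbn | hbn
    · rcases Nat.lt_or_ge b r with hbr | hbr
      · rw [hub_lo b hbr, neg_zero, zero_mul]
      · rw [hAbar r le_rfl hr b hbr hbn, mul_zero]
    · have hpair : symp (Cb r) (Cb b) = 0 := by
        rw [hCb_def, ← cast_symp]
        have h4 := hCu r (by omega) (b - n) (by omega)
        rw [if_neg (by omega)] at h4
        have h5 : C b = u (b - n) := by
          simp only [hC_def, if_neg (by omega : ¬ b < n)]
        rw [h5, h4]; simp
      rw [hpair, mul_zero]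
  exact one_ne_zero hfinal

/-- The inductive construction of the dual family. -/
theorem rec_exists {g n : ℕ} (hn : n ≤ g) (v : ℕ → Fin (2 * g) → ℤ)
    (hds0 : ∀ t : ℕ → ℤ, ∃ x, ∀ i < n, symp (v i) x = t i) :
    ∀ r, r ≤ n → ∃ u : ℕ → Fin (2 * g) → ℤ,
      (∀ i < n, ∀ j < r, symp (v i) (u j) = if i = j then 1 else 0) ∧
      (∀ i < r, ∀ j < r, symp (u i) (u j) = 0) ∧
      (∀ t : ℕ → ℤ, ∃ x, (∀ i < n, symp (v i) x = t i) ∧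
        ∀ j < r, symp (u j) x = t (n + j)) := by
  intro r
  induction r with
  | zero =>
    intro _
    exact ⟨fun _ => 0, fun i _ j hj => absurd hj (Nat.not_lt_zero j),
      fun i hi => absurd hi (Nat.not_lt_zero i),
      fun t => by
        obtain ⟨x, hx⟩ := hds0 t
        exact ⟨x, hx, fun j hj => absurd hj (Nat.not_lt_zero j)⟩⟩
  | succ r ih =>
    intro hr1
    have hr : r < n := hr1
    obtain ⟨u, hvu, huu, hds⟩ := ih (by omega)
    -- particular solution u₀
    obtain ⟨u₀, hu₀v', hu₀u'⟩ := hds (fun a => if a = r then 1 else 0)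
    have hu₀v : ∀ i < n, symp (v i) u₀ = if i = r then 1 else 0 := hu₀v'
    have hu₀u : ∀ j < r, symp (u j) u₀ = 0 := by
      intro j hj
      rw [hu₀u' j hj, if_neg (by omega)]
    -- the hypothesis of the coset lemma, via the counting argument
    have hyp : ∀ p : ℕ, p.Prime →
        (∃ x ∈ Ksub n r v u, ¬ (p : ℤ) ∣ symp x u₀) ∨
        ∃ x ∈ Ksub n r v u, ∃ z ∈ Ksub n r v u, ¬ (p : ℤ) ∣ symp x z := by
      intro p hp
      by_contra hcon
      push_neg at hcon
      obtain ⟨h1, h2⟩ := hcon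
      exact modp_contra hn hr v u hvu huu hds u₀ hu₀v hu₀u p hp h1 h2
    obtain ⟨x, hxK, z, hzK, hxz⟩ := lemB (Ksub n r v u) u₀ hyp
    obtain ⟨hxv, hxu⟩ := hxK
    obtain ⟨hzv, hzu⟩ := hzK
    -- the new vector
    set unew : ℕ → Fin (2 * g) → ℤ := fun j => if j < r then u j else u₀ + z with hunew_def
    have hunew_lt : ∀ j, j < r → unew j = u j := fun j hj => by
      simp only [hunew_def, if_pos hj]
    have hunew_r : unew r = u₀ + z := by
      simp only [hunew_def, if_neg (lt_irrefl r)]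
    refine ⟨unew, ?_, ?_, ?_⟩
    · intro i hi j hj
      by_cases hjr : j < r
      · rw [hunew_lt j hjr]; exact hvu i hi j hjr
      · have hjr' : j = r := by omega
        subst hjr'
        rw [hunew_r, symp_add_right, hu₀v i hi, hzv i hi, add_zero]
    · intro i hi j hj
      have key : ∀ k < r, symp (u k) (u₀ + z) = 0 := by
        intro k hk
        rw [symp_add_right, hu₀u k hk, hzu k hk, add_zero]
      by_cases hir : i < r <;> by_cases hjr : j < r
      · rw [hunew_lt i hir, hunew_lt j hjr]; exact huu i hir j hjr
      · have hjr' : j = r := by omega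
        subst hjr'
        rw [hunew_lt i hir, hunew_r]; exact key i hir
      · have hir' : i = r := by omega
        subst hir'
        rw [hunew_lt j hjr, hunew_r, symp_skew, key j hjr, neg_zero]
      · have hir' : i = r := by omega
        have hjr' : j = r := by omega
        subst hir'; subst hjr'
        rw [symp_self]
    · intro t
      obtain ⟨x₀, hx₀v, hx₀u⟩ := hds t
      refine ⟨x₀ + (-(t (n + r)) - symp x₀ (u₀ + z)) • x, ?_, ?_⟩
      · intro i hi
        rw [symp_add_right, symp_smul_right, hx₀v i hi, hxv i hi, mul_zero, add_zero]
      · intro j hj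
        by_cases hjr : j < r
        · rw [hunew_lt j hjr, symp_add_right, symp_smul_right, hx₀u j hjr,
            hxu j hjr, mul_zero, add_zero]
        · have hjr' : j = r := by omega
          subst hjr'
          rw [hunew_r, symp_add_right, symp_smul_right]
          rw [symp_skew (u₀ + z) x₀]
          have h4 : symp (u₀ + z) x = -1 := by
            rw [symp_skew, hxz]
          rw [h4]
          ring
/-- existence of a dual summand, Prop. 2.11 (i). -/
theorem stmt4 (g n : ℕ) (hn : 1 ≤ n) (hng : n ≤ g)
    (v : Fin n → Fin (2 * g) → ℤ) (hv : IsUnimodular v) :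
    ∃ u : Fin n → Fin (2 * g) → ℤ,
      IsUnimodular u ∧
      (∀ i j, symp (u i) (u j) = 0) ∧
      (∀ i j, symp (v i) (u j) = if i = j then 1 else 0) ∧
      (∀ x ∈ Submodule.span ℤ (Set.range v) ⊔ Submodule.span ℤ (Set.range u),
        (∀ y ∈ Submodule.span ℤ (Set.range v) ⊔ Submodule.span ℤ (Set.range u),
          symp x y = 0) → x = 0) ∧
      IsCompl (Submodule.span ℤ (Set.range v) ⊔ Submodule.span ℤ (Set.range u))
        (perp ((Submodule.span ℤ (Set.range v) ⊔ Submodule.span ℤ (Set.range u) :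
          Submodule ℤ (Fin (2 * g) → ℤ)) : Set (Fin (2 * g) → ℤ))) ∧
      ∀ T : Submodule ℤ (Fin (2 * g) → ℤ),
        IsCompl (Submodule.span ℤ (Set.range v) ⊔ Submodule.span ℤ (Set.range u)) T →
        (∀ s ∈ Submodule.span ℤ (Set.range v) ⊔ Submodule.span ℤ (Set.range u),
          ∀ t ∈ T, symp s t = 0) →
        T = perp ((Submodule.span ℤ (Set.range v) ⊔ Submodule.span ℤ (Set.range u) :
          Submodule ℤ (Fin (2 * g) → ℤ)) : Set (Fin (2 * g) → ℤ)) := by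
  classical
  obtain ⟨q, hq⟩ := unimodular_duals v hv
  -- ℕ-indexed version of v
  set V : ℕ → Fin (2 * g) → ℤ := fun i => if h : i < n then v ⟨i, h⟩ else 0 with hV_def
  have hVv : ∀ (i : ℕ) (hi : i < n), V i = v ⟨i, hi⟩ := fun i hi => by
    simp only [hV_def, dif_pos hi]
  have hds0 : ∀ t : ℕ → ℤ, ∃ x, ∀ i < n, symp (V i) x = t i := by
    intro t
    refine ⟨∑ j : Fin n, t j.1 • q j, ?_⟩
    intro i hi
    rw [hVv i hi, symp_sum_right, Finset.sum_eq_single (⟨i, hi⟩ : Fin n)]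
    · rw [symp_smul_right, hq ⟨i, hi⟩ ⟨i, hi⟩, if_pos rfl, mul_one]
    · intro b _ hb
      rw [symp_smul_right, hq ⟨i, hi⟩ b, if_neg (fun h => hb h.symm), mul_zero]
    · intro h; exact absurd (Finset.mem_univ _) h
  obtain ⟨U, hvU, hUU, _⟩ := rec_exists hng V hds0 n le_rfl
  set u : Fin n → Fin (2 * g) → ℤ := fun j => U j.1 with hu_def
  have hpair : ∀ i j : Fin n, symp (v i) (u j) = if i = j then 1 else 0 := by
    intro i j
    have h1 := hvU i.1 i.2 j.1 j.2
    rw [hVv i.1 i.2] at h1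
    simp only [Fin.eta] at h1
    rw [hu_def, h1]
    congr 1
    simp [Fin.ext_iff]
  have hiso : ∀ i j : Fin n, symp (u i) (u j) = 0 := fun i j => hUU i.1 i.2 j.1 j.2
  -- helper pairing computations
  have hA0 : ∀ (c : Fin n → ℤ) (k : Fin n), symp (v k) (∑ j, c j • u j) = c k := by
    intro c k
    rw [symp_sum_right, Finset.sum_eq_single k]
    · rw [symp_smul_right, hpair k k, if_pos rfl, mul_one]
    · intro b _ hb
      rw [symp_smul_right, hpair k b, if_neg (fun h => hb h.symm), mul_zero]
    · intro h; exact absurd (Finset.mem_univ _) h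
  have hA1 : ∀ (c : Fin n → ℤ) (k : Fin n), symp (∑ j, c j • v j) (u k) = c k := by
    intro c k
    rw [symp_sum_left, Finset.sum_eq_single k]
    · rw [symp_smul_left, hpair k k, if_pos rfl, mul_one]
    · intro b _ hb
      rw [symp_smul_left, hpair b k, if_neg hb, mul_zero]
    · intro h; exact absurd (Finset.mem_univ _) h
  have hA2 : ∀ (c : Fin n → ℤ) (k : Fin n), symp (∑ j, c j • u j) (u k) = 0 := by
    intro c k
    rw [symp_sum_left]
    apply Finset.sum_eq_zero
    intro b _
    rw [symp_smul_left, hiso b k, mul_zero]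
  have hA3 : ∀ (c : Fin n → ℤ) (k : Fin n), symp (∑ j, c j • u j) (v k) = -(c k) := by
    intro c k
    rw [symp_sum_left, Finset.sum_eq_single k]
    · rw [symp_smul_left, symp_skew, hpair k k, if_pos rfl]
      ring
    · intro b _ hb
      rw [symp_smul_left, symp_skew, hpair k b, if_neg (fun h => hb h.symm)]
      ring
    · intro h; exact absurd (Finset.mem_univ _) h
  -- unimodularity of u
  have hu_unim : IsUnimodular u := by
    constructor
    · rw [Fintype.linearIndependent_iff]
      intro c hc i
      have h1 : symp (v i) (∑ j, c j • u j) = 0 := by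
        rw [hc, symp_zero_right]
      rwa [hA0 c i] at h1
    · -- projection onto the span of u
      have hF0mem : ∀ x, (∑ j : Fin n, (sympR (v j)).smulRight (u j)) x ∈
          Submodule.span ℤ (Set.range u) := by
        intro x
        rw [LinearMap.sum_apply]
        apply Submodule.sum_mem
        intro j _
        rw [LinearMap.smulRight_apply]
        exact Submodule.smul_mem _ _ (Submodule.subset_span ⟨j, rfl⟩)
      have hF0id : ∀ y ∈ Submodule.span ℤ (Set.range u),
          (∑ j : Fin n, (sympR (v j)).smulRight (u j)) y = y := by
        intro y hy
        induction hy using Submodule.span_induction with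
        | mem w hw =>
          obtain ⟨k, rfl⟩ := hw
          rw [LinearMap.sum_apply, Finset.sum_eq_single k]
          · rw [LinearMap.smulRight_apply, sympR_apply, hpair k k, if_pos rfl, one_smul]
          · intro b _ hb
            rw [LinearMap.smulRight_apply, sympR_apply, hpair b k, if_neg hb, zero_smul]
          · intro h; exact absurd (Finset.mem_univ _) h
        | zero => rw [map_zero]
        | add y z _ _ hy hz => rw [map_add, hy, hz]
        | smul c y _ hy => rw [map_smul, hy]
      set f : (Fin (2 * g) → ℤ) →ₗ[ℤ] Submodule.span ℤ (Set.range u) :=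
        LinearMap.codRestrict _ (∑ j : Fin n, (sympR (v j)).smulRight (u j)) hF0mem
        with hf_def
      have hfid : ∀ x : Submodule.span ℤ (Set.range u), f x = x := by
        intro x
        apply Subtype.ext
        simp only [hf_def, LinearMap.codRestrict_apply]
        exact hF0id x.1 x.2
      exact ⟨LinearMap.ker f, LinearMap.isCompl_of_proj hfid⟩
  -- the sum module
  have hMrep : ∀ x ∈ Submodule.span ℤ (Set.range v) ⊔ Submodule.span ℤ (Set.range u),
      ∃ a b : Fin n → ℤ, x = (∑ j, a j • v j) + (∑ j, b j • u j) := by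
    intro x hx
    obtain ⟨y, hy, z, hz, rfl⟩ := Submodule.mem_sup.mp hx
    obtain ⟨a, ha⟩ := (Submodule.mem_span_range_iff_exists_fun ℤ).mp hy
    obtain ⟨b, hb⟩ := (Submodule.mem_span_range_iff_exists_fun ℤ).mp hz
    exact ⟨a, b, by rw [ha, hb]⟩
  have hvM : ∀ k : Fin n, v k ∈ Submodule.span ℤ (Set.range v) ⊔ Submodule.span ℤ (Set.range u) :=
    fun k => Submodule.mem_sup_left (Submodule.subset_span ⟨k, rfl⟩)
  have huM : ∀ k : Fin n, u k ∈ Submodule.span ℤ (Set.range v) ⊔ Submodule.span ℤ (Set.range u) :=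
    fun k => Submodule.mem_sup_right (Submodule.subset_span ⟨k, rfl⟩)
  -- nondegeneracy on the sum
  have hnondeg : ∀ x ∈ Submodule.span ℤ (Set.range v) ⊔ Submodule.span ℤ (Set.range u),
      (∀ y ∈ Submodule.span ℤ (Set.range v) ⊔ Submodule.span ℤ (Set.range u),
        symp x y = 0) → x = 0 := by
    intro x hx hall
    obtain ⟨a, b, rfl⟩ := hMrep x hx
    have ha : ∀ k, a k = 0 := by
      intro k
      have h1 := hall (u k) (huM k)
      rw [symp_add_left, hA1 a k, hA2 b k, add_zero] at h1
      exact h1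
    have hb : ∀ k, b k = 0 := by
      intro k
      have h1 := hall (v k) (hvM k)
      rw [symp_add_left, hA3 b k] at h1
      have h2 : symp (∑ j, a j • v j) (v k) = 0 := by
        rw [symp_sum_left]
        apply Finset.sum_eq_zero
        intro j _
        rw [symp_smul_left, ha j, zero_mul]
      rw [h2, zero_add, neg_eq_zero] at h1
      exact h1
    have : ∀ (c : Fin n → ℤ) (w : Fin n → Fin (2 * g) → ℤ), (∀ k, c k = 0) →
        ∑ j, c j • w j = (0 : Fin (2 * g) → ℤ) := by
      intro c w hc
      apply Finset.sum_eq_zero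
      intro j _
      rw [hc j, zero_smul]
    rw [this a v ha, this b u hb, add_zero]
  -- the decomposition x = m + (x - m)
  have hdecomp : ∀ x : Fin (2 * g) → ℤ,
      ∃ m ∈ Submodule.span ℤ (Set.range v) ⊔ Submodule.span ℤ (Set.range u),
        (∀ k : Fin n, symp (x - m) (v k) = 0) ∧ ∀ k : Fin n, symp (x - m) (u k) = 0 := by
    intro x
    set m : Fin (2 * g) → ℤ := (∑ j, (symp x (u j)) • v j) +
      (∑ j, (symp (v j) x + ∑ i, symp (v j) (v i) * symp (u i) x) • u j) with hm_def
    have hmM : m ∈ Submodule.span ℤ (Set.range v) ⊔ Submodule.span ℤ (Set.range u) := by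
      apply Submodule.add_mem
      · apply Submodule.sum_mem
        intro j _
        exact Submodule.smul_mem _ _ (hvM j)
      · apply Submodule.sum_mem
        intro j _
        exact Submodule.smul_mem _ _ (huM j)
    refine ⟨m, hmM, ?_, ?_⟩
    · intro k
      rw [symp_sub_left, hm_def, symp_add_left, hA3]
      have h2 : symp (∑ j, (symp x (u j)) • v j) (v k)
          = ∑ j, symp x (u j) * symp (v j) (v k) := by
        rw [symp_sum_left]
        exact Finset.sum_congr rfl fun j _ => by rw [symp_smul_left]
      rw [h2]
      have h3 : ∑ j, symp x (u j) * symp (v j) (v k)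
          = ∑ i, symp (v k) (v i) * symp (u i) x := by
        apply Finset.sum_congr rfl
        intro j _
        rw [symp_skew x (u j), symp_skew (v j) (v k)]
        ring
      rw [h3, symp_skew x (v k)]
      ring
    · intro k
      rw [symp_sub_left, hm_def, symp_add_left, hA1, hA2, add_zero]
      ring
  have hperp_mem0 : ∀ y, (∀ k : Fin n, symp y (v k) = 0) → (∀ k : Fin n, symp y (u k) = 0) →
      ∀ aa ∈ Submodule.span ℤ (Set.range v ∪ Set.range u), symp y aa = 0 := by
    intro y hyv hyu aa haa
    induction haa using Submodule.span_induction with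
    | mem w hw =>
      rcases hw with ⟨k, rfl⟩ | ⟨k, rfl⟩
      · exact hyv k
      · exact hyu k
    | zero => exact symp_zero_right y
    | add s t _ _ hs ht => rw [symp_add_right, hs, ht, add_zero]
    | smul c s _ hs => rw [symp_smul_right, hs, mul_zero]
  have hperp_mem : ∀ y, (∀ k : Fin n, symp y (v k) = 0) → (∀ k : Fin n, symp y (u k) = 0) →
      y ∈ perp ((Submodule.span ℤ (Set.range v) ⊔ Submodule.span ℤ (Set.range u) :
        Submodule ℤ (Fin (2 * g) → ℤ)) : Set (Fin (2 * g) → ℤ)) := by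
    intro y hyv hyu aa haa
    apply hperp_mem0 y hyv hyu aa
    rw [Submodule.span_union]
    exact haa
  have hcompl : IsCompl (Submodule.span ℤ (Set.range v) ⊔ Submodule.span ℤ (Set.range u))
      (perp ((Submodule.span ℤ (Set.range v) ⊔ Submodule.span ℤ (Set.range u) :
        Submodule ℤ (Fin (2 * g) → ℤ)) : Set (Fin (2 * g) → ℤ))) := by
    constructor
    · rw [disjoint_iff]
      rw [Submodule.eq_bot_iff]
      intro x hx
      obtain ⟨hxM, hxP⟩ := Submodule.mem_inf.mp hx
      exact hnondeg x hxM (fun y hy => hxP y hy)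
    · rw [codisjoint_iff, eq_top_iff]
      intro x _
      obtain ⟨m, hmM, hv0, hu0⟩ := hdecomp x
      rw [Submodule.mem_sup]
      exact ⟨m, hmM, x - m, hperp_mem (x - m) hv0 hu0, by ring⟩
  refine ⟨u, hu_unim, hiso, hpair, hnondeg, hcompl, ?_⟩
  -- uniqueness of the complement
  intro T hT horth
  have hTperp : T ≤ perp ((Submodule.span ℤ (Set.range v) ⊔ Submodule.span ℤ (Set.range u) :
      Submodule ℤ (Fin (2 * g) → ℤ)) : Set (Fin (2 * g) → ℤ)) := by
    intro t ht
    intro aa haa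
    rw [symp_skew, horth aa haa t ht, neg_zero]
  apply le_antisymm hTperp
  intro x hx
  have hxMT : x ∈ (Submodule.span ℤ (Set.range v) ⊔ Submodule.span ℤ (Set.range u)) ⊔ T := by
    rw [hT.sup_eq_top]; trivial
  obtain ⟨m, hmM, t, htT, hmt⟩ := Submodule.mem_sup.mp hxMT
  have hm_perp : m ∈ perp ((Submodule.span ℤ (Set.range v) ⊔ Submodule.span ℤ (Set.range u) :
      Submodule ℤ (Fin (2 * g) → ℤ)) : Set (Fin (2 * g) → ℤ)) := by
    have hmeq : m = x - t := by rw [← hmt]; ring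
    rw [hmeq]
    exact Submodule.sub_mem _ hx (hTperp htT)
  have hm0 : m = 0 := hnondeg m hmM (fun y hy => hm_perp y hy)
  rw [← hmt, hm0, zero_add]
  exact htT

end Paper
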